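/- arXiv:1311.2181 — 3 statements merged into one kernel-verified Lean document; each statement's English description precedes it below -/
import Mathlib

section
/- Suppose Assumption A4 holds and σ > 0, and let V(t,t0) be the solution matrix of u̇ = σL(t)u. Then for all t ≥ t0 and all indices k and i ≠ k: V(t,t0)_{kk} ≥ e^{−σM₁(t−t0)}, and V(t,t0)_{ik} ≥ e^{−σM₁(t−t0)} · σ∫_{t0}^{t} l_ik(τ)dτ. In particular, if ∫_{t0}^{t0+T} l_ik(τ)dτ > δ for some δ, T > 0, then V(t0+T, t0)_{ik} ≥ e^{−σM₁T}σδ. -/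
set_option maxHeartbeats 1000000


/-- diagonal and off-diagonal lower bounds for the solution matrix of
`u̇ = σL(t)u` under Assumption A4:
`V(t,t0)_{kk} ≥ e^{−σM₁(t−t0)}` and, for `i ≠ k`,
`V(t,t0)_{ik} ≥ e^{−σM₁(t−t0)} σ ∫_{t0}^{t} l_ik`; in particular a `δ`-edge across
`[t0,t0+T]` forces `V(t0+T,t0)_{ik} ≥ e^{−σM₁T} σ δ`. -/
theorem stmt_14 (m : ℕ) (hm : 0 < m) (σ : ℝ) (hσ : 0 < σ)
    (L : ℝ → Matrix (Fin m) (Fin m) ℝ) (M₁ : ℝ) (hM₁ : 0 < M₁)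
    (hmeas : ∀ i j, Measurable fun t => L t i j)
    (hoff : ∀ t, 0 ≤ t → ∀ i j, i ≠ j → 0 ≤ L t i j)
    (hdiag : ∀ t, 0 ≤ t → ∀ i, L t i i = -∑ j ∈ ({i}ᶜ : Finset (Fin m)), L t i j)
    (hbdd : ∀ t, 0 ≤ t → ∀ i j, |L t i j| ≤ M₁)
    (V : ℝ → ℝ → Matrix (Fin m) (Fin m) ℝ)
    (hV0 : ∀ t0, 0 ≤ t0 → V t0 t0 = 1)
    (hVd : ∀ t0, 0 ≤ t0 → ∀ t ∈ Set.Ici t0, ∀ i j,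
        HasDerivAt (fun τ => V τ t0 i j) (σ * ∑ k, L t i k * V t t0 k j) t) :
    (∀ t0, 0 ≤ t0 → ∀ t ∈ Set.Ici t0, ∀ k : Fin m,
      Real.exp (-(σ * M₁ * (t - t0))) ≤ V t t0 k k) ∧
    (∀ t0, 0 ≤ t0 → ∀ t ∈ Set.Ici t0, ∀ k i : Fin m, i ≠ k →
      Real.exp (-(σ * M₁ * (t - t0))) * (σ * ∫ τ in t0..t, L τ i k) ≤ V t t0 i k) ∧
    (∀ t0, 0 ≤ t0 → ∀ δ T : ℝ, 0 < δ → 0 < T → ∀ k i : Fin m, i ≠ k →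
      δ < (∫ τ in t0..(t0 + T), L τ i k) →
      Real.exp (-(σ * M₁ * T)) * σ * δ ≤ V (t0 + T) t0 i k) := by
  classical
  have hm' : (0 : ℝ) < m := by exact_mod_cast hm
  -- continuity of the entries of V on [t0, ∞)
  have hcont : ∀ t0 : ℝ, 0 ≤ t0 → ∀ i j : Fin m, ∀ t ∈ Set.Ici t0,
      ContinuousAt (fun τ => V τ t0 i j) t :=
    fun t0 ht0 i j t ht => (hVd t0 ht0 t ht i j).continuousAt
  -- the derivative of the rescaled entries
  have hder : ∀ t0 : ℝ, 0 ≤ t0 → ∀ i j : Fin m, ∀ τ ∈ Set.Ici t0,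
      HasDerivAt (fun τ => Real.exp (σ * M₁ * (τ - t0)) * V τ t0 i j)
        (Real.exp (σ * M₁ * (τ - t0)) * (σ * M₁) * V τ t0 i j
          + Real.exp (σ * M₁ * (τ - t0)) * (σ * ∑ k, L τ i k * V τ t0 k j)) τ := by
    intro t0 ht0 i j τ hτ
    have e1 : HasDerivAt (fun τ : ℝ => σ * M₁ * (τ - t0)) (σ * M₁) τ := by
      simpa using ((hasDerivAt_id τ).sub_const t0).const_mul (σ * M₁)
    exact e1.exp.mul (hVd t0 ht0 τ hτ i j)
  set K : ℝ := 2 * σ * M₁ * m with hK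
  have hKpos : 0 < K := by positivity
  -- key perturbed lower bound
  have key : ∀ t0 : ℝ, 0 ≤ t0 → ∀ t1 ∈ Set.Ici t0, ∀ ε : ℝ, 0 < ε →
      ∀ t ∈ Set.Icc t0 t1, ∀ i j : Fin m,
      -(ε * Real.exp (K * (t - t0))) ≤ Real.exp (σ * M₁ * (t - t0)) * V t t0 i j := by
    intro t0 ht0 t1 ht1 ε hε
    by_contra hcon
    push_neg at hcon
    obtain ⟨tb, htb, ib, jb, hbad⟩ := hcon
    set W : Fin m → Fin m → ℝ → ℝ :=
      fun i j t => Real.exp (σ * M₁ * (max t t0 - t0)) * V (max t t0) t0 i j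
        + ε * Real.exp (K * (t - t0)) with hW
    have hWc : ∀ i j, Continuous (W i j) := by
      intro i j
      apply Continuous.add
      · apply Continuous.mul
        · exact Real.continuous_exp.comp (by continuity)
        · refine continuous_iff_continuousAt.2 fun t => ?_
          exact ContinuousAt.comp (g := fun s => V s t0 i j) (f := fun t : ℝ => max t t0)
            (hcont t0 ht0 i j (max t t0) (Set.mem_Ici.2 (le_max_right _ _)))
            ((continuous_id.max continuous_const).continuousAt)
      · exact continuous_const.mul (Real.continuous_exp.comp (by continuity))
    set S : Set ℝ := Set.Icc t0 t1 ∩ ⋃ p : Fin m × Fin m, {t | W p.1 p.2 t ≤ 0} with hS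
    have hSclosed : IsClosed S := isClosed_Icc.inter
      (isClosed_iUnion_of_finite fun p => isClosed_le (hWc p.1 p.2) continuous_const)
    have hSne : S.Nonempty := by
      refine ⟨tb, htb, Set.mem_iUnion.2 ⟨(ib, jb), ?_⟩⟩
      simp only [Set.mem_setOf_eq, hW]
      rw [max_eq_left htb.1]
      linarith
    have hSbdd : BddBelow S := ⟨t0, fun x hx => hx.1.1⟩
    set s := sInf S with hs
    have hsS : s ∈ S := hSclosed.csInf_mem hSne hSbdd
    obtain ⟨⟨hst0, hst1⟩, hsU⟩ := hsS
    obtain ⟨⟨i0, j0⟩, hg0⟩ := Set.mem_iUnion.1 hsU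
    simp only [Set.mem_setOf_eq] at hg0
    have hWt0 : ∀ p : Fin m × Fin m, 0 < W p.1 p.2 t0 := by
      intro p
      simp only [hW, max_self, sub_self, mul_zero, Real.exp_zero, one_mul, mul_one]
      rw [hV0 t0 ht0]
      rcases eq_or_ne p.1 p.2 with h | h
      · rw [h, Matrix.one_apply_eq]; linarith
      · rw [Matrix.one_apply_ne h]; linarith
    have hts : t0 < s := by
      rcases lt_or_eq_of_le hst0 with h | h
      · exact h
      · exfalso; have := hWt0 (i0, j0); rw [h] at this; linarith
    -- strict lower bound before s
    have hlow : ∀ τ ∈ Set.Ico t0 s, ∀ k l : Fin m,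
        -(ε * Real.exp (K * (τ - t0))) ≤ Real.exp (σ * M₁ * (τ - t0)) * V τ t0 k l := by
      intro τ hτ k l
      by_contra hneg
      push_neg at hneg
      have hτS : τ ∈ S := by
        refine ⟨⟨hτ.1, le_trans hτ.2.le hst1⟩, Set.mem_iUnion.2 ⟨(k, l), ?_⟩⟩
        simp only [Set.mem_setOf_eq, hW]
        rw [max_eq_left hτ.1]
        linarith
      have : s ≤ τ := csInf_le hSbdd hτS
      exact absurd this (not_le.2 hτ.2)
    -- the candidate monotone function
    have hhder : ∀ τ ∈ Set.Ici t0, HasDerivAt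
        (fun τ => Real.exp (σ * M₁ * (τ - t0)) * V τ t0 i0 j0
          + ε * Real.exp (K * (τ - t0)))
        ((Real.exp (σ * M₁ * (τ - t0)) * (σ * M₁) * V τ t0 i0 j0
          + Real.exp (σ * M₁ * (τ - t0)) * (σ * ∑ k, L τ i0 k * V τ t0 k j0))
          + ε * (Real.exp (K * (τ - t0)) * K)) τ := by
      intro τ hτ
      have e3 : HasDerivAt (fun τ : ℝ => K * (τ - t0)) K τ := by
        simpa using ((hasDerivAt_id τ).sub_const t0).const_mul K
      exact (hder t0 ht0 i0 j0 τ hτ).add (e3.exp.const_mul ε)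
    have hpos : ∀ τ ∈ Set.Ioo t0 s,
        0 ≤ (Real.exp (σ * M₁ * (τ - t0)) * (σ * M₁) * V τ t0 i0 j0
          + Real.exp (σ * M₁ * (τ - t0)) * (σ * ∑ k, L τ i0 k * V τ t0 k j0))
          + ε * (Real.exp (K * (τ - t0)) * K) := by
      intro τ hτI
      have hτ0 : 0 ≤ τ := le_trans ht0 hτI.1.le
      have hEpos : 0 < Real.exp (K * (τ - t0)) := Real.exp_pos _
      have hlo : ∀ k : Fin m, -(ε * Real.exp (K * (τ - t0)))
          ≤ Real.exp (σ * M₁ * (τ - t0)) * V τ t0 k j0 :=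
        fun k => hlow τ ⟨hτI.1.le, hτI.2⟩ k j0
      have ha_nonneg : ∀ k : Fin m, 0 ≤ σ * (L τ i0 k + if k = i0 then M₁ else 0) := by
        intro k
        rcases eq_or_ne k i0 with hk | hk
        · subst hk
          simp only [if_pos rfl]
          have := (abs_le.1 (hbdd τ hτ0 k k)).1
          have hnn : 0 ≤ L τ k k + M₁ := by linarith
          exact mul_nonneg hσ.le hnn
        · simp only [if_neg hk, add_zero]
          exact mul_nonneg hσ.le (hoff τ hτ0 i0 k (Ne.symm hk))
      have ha_le : ∀ k : Fin m, σ * (L τ i0 k + if k = i0 then M₁ else 0) ≤ σ * (2 * M₁) := by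
        intro k
        have hLle := (abs_le.1 (hbdd τ hτ0 i0 k)).2
        have : L τ i0 k + (if k = i0 then M₁ else 0) ≤ 2 * M₁ := by
          split <;> linarith
        exact mul_le_mul_of_nonneg_left this hσ.le
      have hsplit : ∑ k, (σ * (L τ i0 k + if k = i0 then M₁ else 0))
            * (Real.exp (σ * M₁ * (τ - t0)) * V τ t0 k j0)
          = Real.exp (σ * M₁ * (τ - t0)) * (σ * M₁) * V τ t0 i0 j0
            + Real.exp (σ * M₁ * (τ - t0)) * (σ * ∑ k, L τ i0 k * V τ t0 k j0) := by
        have hterm : ∀ k : Fin m, (σ * (L τ i0 k + if k = i0 then M₁ else 0))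
              * (Real.exp (σ * M₁ * (τ - t0)) * V τ t0 k j0)
            = (if k = i0 then Real.exp (σ * M₁ * (τ - t0)) * (σ * M₁) * V τ t0 k j0 else 0)
              + Real.exp (σ * M₁ * (τ - t0)) * (σ * (L τ i0 k * V τ t0 k j0)) := by
          intro k
          by_cases hk : k = i0 <;> simp only [hk, if_pos, if_neg, ite_true, ite_false] <;> ring
        rw [Finset.sum_congr rfl fun k _ => hterm k, Finset.sum_add_distrib,
          Finset.sum_ite_eq' Finset.univ i0]
        simp [Finset.mul_sum]
      have hsum1 : ∑ k, σ * (L τ i0 k + if k = i0 then M₁ else 0) ≤ K := by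
        calc ∑ k, σ * (L τ i0 k + if k = i0 then M₁ else 0)
            ≤ ∑ _k : Fin m, σ * (2 * M₁) := Finset.sum_le_sum fun k _ => ha_le k
          _ = m * (σ * (2 * M₁)) := by
              rw [Finset.sum_const, Finset.card_univ, Fintype.card_fin, nsmul_eq_mul]
          _ = K := by rw [hK]; ring
      have hstep1 : K * (-(ε * Real.exp (K * (τ - t0))))
          ≤ (∑ k, σ * (L τ i0 k + if k = i0 then M₁ else 0))
            * (-(ε * Real.exp (K * (τ - t0)))) :=
        mul_le_mul_of_nonpos_right hsum1 (by nlinarith)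
      have hstep2 : (∑ k, σ * (L τ i0 k + if k = i0 then M₁ else 0))
            * (-(ε * Real.exp (K * (τ - t0))))
          ≤ ∑ k, (σ * (L τ i0 k + if k = i0 then M₁ else 0))
            * (Real.exp (σ * M₁ * (τ - t0)) * V τ t0 k j0) := by
        rw [Finset.sum_mul]
        exact Finset.sum_le_sum fun k _ => mul_le_mul_of_nonneg_left (hlo k) (ha_nonneg k)
      have := hstep1.trans hstep2
      rw [hsplit] at this
      nlinarith
    have hmono : MonotoneOn (fun τ => Real.exp (σ * M₁ * (τ - t0)) * V τ t0 i0 j0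
        + ε * Real.exp (K * (τ - t0))) (Set.Icc t0 s) := by
      apply monotoneOn_of_hasDerivWithinAt_nonneg (convex_Icc t0 s)
        (f' := fun τ => (Real.exp (σ * M₁ * (τ - t0)) * (σ * M₁) * V τ t0 i0 j0
          + Real.exp (σ * M₁ * (τ - t0)) * (σ * ∑ k, L τ i0 k * V τ t0 k j0))
          + ε * (Real.exp (K * (τ - t0)) * K))
      · exact fun x hx => ((hhder x hx.1).continuousAt).continuousWithinAt
      · intro x hx
        rw [interior_Icc] at hx
        exact (hhder x hx.1.le).hasDerivWithinAt
      · intro x hx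
        rw [interior_Icc] at hx
        exact hpos x hx
    have h1 : Real.exp (σ * M₁ * (t0 - t0)) * V t0 t0 i0 j0 + ε * Real.exp (K * (t0 - t0))
        ≤ Real.exp (σ * M₁ * (s - t0)) * V s t0 i0 j0 + ε * Real.exp (K * (s - t0)) :=
      hmono ⟨le_refl t0, hst0⟩ ⟨hst0, le_refl s⟩ hst0
    have h2 : Real.exp (σ * M₁ * (s - t0)) * V s t0 i0 j0 + ε * Real.exp (K * (s - t0)) ≤ 0 := by
      have heqW : W i0 j0 s = Real.exp (σ * M₁ * (s - t0)) * V s t0 i0 j0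
          + ε * Real.exp (K * (s - t0)) := by
        simp only [hW]
        rw [max_eq_left hst0]
      rw [heqW] at hg0; exact hg0
    have h3 : ε ≤ Real.exp (σ * M₁ * (t0 - t0)) * V t0 t0 i0 j0
        + ε * Real.exp (K * (t0 - t0)) := by
      simp only [sub_self, mul_zero, Real.exp_zero, one_mul, mul_one]
      rw [hV0 t0 ht0]
      rcases eq_or_ne i0 j0 with h | h
      · rw [h, Matrix.one_apply_eq]; linarith
      · rw [Matrix.one_apply_ne h]; linarith
    linarith
  -- nonnegativity of V
  have hVnonneg : ∀ t0 : ℝ, 0 ≤ t0 → ∀ t ∈ Set.Ici t0, ∀ i j : Fin m, 0 ≤ V t t0 i j := by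
    intro t0 ht0 t ht i j
    by_contra hneg
    push_neg at hneg
    have hcpos : (0:ℝ) < Real.exp (σ * M₁ * (t - t0)) := Real.exp_pos _
    have hEpos : (0:ℝ) < Real.exp (K * (t - t0)) := Real.exp_pos _
    have hcv : Real.exp (σ * M₁ * (t - t0)) * V t t0 i j < 0 :=
      mul_neg_of_pos_of_neg hcpos hneg
    set ε := -(Real.exp (σ * M₁ * (t - t0)) * V t t0 i j) / (2 * Real.exp (K * (t - t0)))
      with hεdef
    have hεpos : 0 < ε := by
      apply div_pos (by linarith) (by linarith)
    have hk := key t0 ht0 t ht ε hεpos t ⟨ht, le_refl t⟩ i j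
    have heq : -(ε * Real.exp (K * (t - t0)))
        = Real.exp (σ * M₁ * (t - t0)) * V t t0 i j / 2 := by
      rw [hεdef]
      field_simp
    rw [heq] at hk
    linarith
  -- Part 1: diagonal lower bound
  have part1 : ∀ t0 : ℝ, 0 ≤ t0 → ∀ t ∈ Set.Ici t0, ∀ k : Fin m,
      Real.exp (-(σ * M₁ * (t - t0))) ≤ V t t0 k k := by
    intro t0 ht0 t ht k
    have hpos : ∀ τ ∈ Set.Ici t0,
        0 ≤ Real.exp (σ * M₁ * (τ - t0)) * (σ * M₁) * V τ t0 k k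
          + Real.exp (σ * M₁ * (τ - t0)) * (σ * ∑ j, L τ k j * V τ t0 j k) := by
      intro τ hτ
      have hτ0 : 0 ≤ τ := le_trans ht0 hτ
      have hsum : L τ k k * V τ t0 k k ≤ ∑ j, L τ k j * V τ t0 j k := by
        have := Finset.sum_le_sum_of_subset_of_nonneg
          (Finset.subset_univ ({k} : Finset (Fin m)))
          (fun j _ hj => mul_nonneg
            (hoff τ hτ0 k j (Ne.symm (Finset.notMem_singleton.1 hj)))
            (hVnonneg t0 ht0 τ hτ j k))
        simpa using this
      have hVkk := hVnonneg t0 ht0 τ hτ k k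
      have hLkk := (abs_le.1 (hbdd τ hτ0 k k)).1
      have hc := Real.exp_pos (σ * M₁ * (τ - t0))
      have hA : 0 ≤ Real.exp (σ * M₁ * (τ - t0)) * σ * (M₁ + L τ k k) * V τ t0 k k :=
        mul_nonneg (mul_nonneg (mul_nonneg hc.le hσ.le) (by linarith)) hVkk
      have hB : Real.exp (σ * M₁ * (τ - t0)) * (σ * (L τ k k * V τ t0 k k))
          ≤ Real.exp (σ * M₁ * (τ - t0)) * (σ * ∑ j, L τ k j * V τ t0 j k) :=
        mul_le_mul_of_nonneg_left (mul_le_mul_of_nonneg_left hsum hσ.le) hc.le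
      nlinarith
    have hmono : MonotoneOn (fun τ => Real.exp (σ * M₁ * (τ - t0)) * V τ t0 k k)
        (Set.Icc t0 t) := by
      apply monotoneOn_of_hasDerivWithinAt_nonneg (convex_Icc t0 t)
        (f' := fun τ => Real.exp (σ * M₁ * (τ - t0)) * (σ * M₁) * V τ t0 k k
          + Real.exp (σ * M₁ * (τ - t0)) * (σ * ∑ j, L τ k j * V τ t0 j k))
      · exact fun x hx => ((hder t0 ht0 k k x hx.1).continuousAt).continuousWithinAt
      · intro x hx
        rw [interior_Icc] at hx
        exact (hder t0 ht0 k k x hx.1.le).hasDerivWithinAt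
      · intro x hx
        rw [interior_Icc] at hx
        exact hpos x hx.1.le
    have h1 : Real.exp (σ * M₁ * (t0 - t0)) * V t0 t0 k k
        ≤ Real.exp (σ * M₁ * (t - t0)) * V t t0 k k :=
      hmono ⟨le_refl t0, ht⟩ ⟨ht, le_refl t⟩ ht
    have h2 : Real.exp (σ * M₁ * (t0 - t0)) * V t0 t0 k k = 1 := by
      simp [hV0 t0 ht0, Matrix.one_apply_eq]
    rw [h2] at h1
    have h3 := mul_le_mul_of_nonneg_left h1 (Real.exp_nonneg (-(σ * M₁ * (t - t0))))
    calc Real.exp (-(σ * M₁ * (t - t0))) = Real.exp (-(σ * M₁ * (t - t0))) * 1 := by ring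
      _ ≤ Real.exp (-(σ * M₁ * (t - t0)))
          * (Real.exp (σ * M₁ * (t - t0)) * V t t0 k k) := h3
      _ = (Real.exp (-(σ * M₁ * (t - t0))) * Real.exp (σ * M₁ * (t - t0))) * V t t0 k k := by
          ring
      _ = V t t0 k k := by rw [← Real.exp_add, neg_add_cancel, Real.exp_zero, one_mul]
  -- Part 2: off-diagonal lower bound
  have part2 : ∀ t0 : ℝ, 0 ≤ t0 → ∀ t ∈ Set.Ici t0, ∀ k i : Fin m, i ≠ k →
      Real.exp (-(σ * M₁ * (t - t0))) * (σ * ∫ τ in t0..t, L τ i k) ≤ V t t0 i k := by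
    intro t0 ht0 t ht k i hik
    have hle : t0 ≤ t := ht
    set F' : ℝ → ℝ := fun τ => Real.exp (σ * M₁ * (τ - t0)) * (σ * M₁) * V τ t0 i k
      + Real.exp (σ * M₁ * (τ - t0)) * (σ * ∑ j, L τ i j * V τ t0 j k) with hF'
    -- a bound for V on the compact interval
    obtain ⟨B, hB⟩ : ∃ B : ℝ, ∀ τ ∈ Set.Icc t0 t, ∑ j, |V τ t0 j k| ≤ B := by
      obtain ⟨C, hC⟩ := (isCompact_Icc :
          IsCompact (Set.Icc t0 t)).exists_bound_of_continuousOn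
        (f := fun τ => ∑ j, |V τ t0 j k|) (by
          apply continuousOn_finset_sum
          intro j _
          exact fun τ hτ => ((hcont t0 ht0 j k τ hτ.1).abs).continuousWithinAt)
      exact ⟨C, fun τ hτ => (le_abs_self _).trans (by simpa [Real.norm_eq_abs] using hC τ hτ)⟩
    have hB0 : 0 ≤ B :=
      le_trans (Finset.sum_nonneg fun j _ => abs_nonneg _) (hB t0 ⟨le_refl t0, hle⟩)
    have hVabs : ∀ τ ∈ Set.Icc t0 t, ∀ j : Fin m, |V τ t0 j k| ≤ B := by
      intro τ hτ j
      exact le_trans (Finset.single_le_sum (f := fun j => |V τ t0 j k|)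
        (fun j _ => abs_nonneg _) (Finset.mem_univ j)) (hB τ hτ)
    -- integrability of F'
    have hVaem : ∀ j : Fin m, AEMeasurable (fun τ => V τ t0 j k)
        (MeasureTheory.volume.restrict (Set.Ioc t0 t)) := by
      intro j
      apply ContinuousOn.aemeasurable _ measurableSet_Ioc
      exact fun τ hτ => (hcont t0 ht0 j k τ hτ.1.le).continuousWithinAt
    have hF'aem : AEMeasurable F' (MeasureTheory.volume.restrict (Set.Ioc t0 t)) := by
      apply AEMeasurable.add
      · exact ((Real.measurable_exp.comp ((measurable_id.sub_const t0).const_mul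
          (σ * M₁))).aemeasurable.mul_const (σ * M₁)).mul (hVaem i)
      · apply AEMeasurable.mul
        · exact (Real.measurable_exp.comp ((measurable_id.sub_const t0).const_mul
            (σ * M₁))).aemeasurable
        · apply AEMeasurable.const_mul
          apply Finset.aemeasurable_fun_sum
          intro j _
          exact ((hmeas i j).aemeasurable).mul (hVaem j)
    have hF'bdd : ∀ τ ∈ Set.Icc t0 t,
        ‖F' τ‖ ≤ Real.exp (σ * M₁ * (t - t0)) * (σ * M₁) * B +
          Real.exp (σ * M₁ * (t - t0)) * (σ * (M₁ * B)) := by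
      intro τ hτ
      have hτ0 : 0 ≤ τ := le_trans ht0 hτ.1
      have hee : Real.exp (σ * M₁ * (τ - t0)) ≤ Real.exp (σ * M₁ * (t - t0)) := by
        apply Real.exp_le_exp.2
        have := hτ.2
        nlinarith
      have heτ : (0:ℝ) < Real.exp (σ * M₁ * (τ - t0)) := Real.exp_pos _
      have hs1 : |∑ j, L τ i j * V τ t0 j k| ≤ M₁ * B := by
        calc |∑ j, L τ i j * V τ t0 j k| ≤ ∑ j, |L τ i j * V τ t0 j k| :=
              Finset.abs_sum_le_sum_abs _ _
          _ = ∑ j, |L τ i j| * |V τ t0 j k| := by simp [abs_mul]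
          _ ≤ ∑ j, M₁ * |V τ t0 j k| := Finset.sum_le_sum fun j _ =>
              mul_le_mul_of_nonneg_right (hbdd τ hτ0 i j) (abs_nonneg _)
          _ = M₁ * ∑ j, |V τ t0 j k| := by rw [Finset.mul_sum]
          _ ≤ M₁ * B := mul_le_mul_of_nonneg_left (hB τ hτ) hM₁.le
      have hvik : |V τ t0 i k| ≤ B := hVabs τ hτ i
      have hpart1 : |Real.exp (σ * M₁ * (τ - t0)) * (σ * M₁) * V τ t0 i k|
          ≤ Real.exp (σ * M₁ * (t - t0)) * (σ * M₁) * B := by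
        rw [abs_mul, abs_mul, abs_of_pos heτ, abs_of_pos (mul_pos hσ hM₁)]
        exact mul_le_mul (mul_le_mul_of_nonneg_right hee (mul_pos hσ hM₁).le)
          hvik (abs_nonneg _) (by positivity)
      have hpart2 : |Real.exp (σ * M₁ * (τ - t0)) * (σ * ∑ j, L τ i j * V τ t0 j k)|
          ≤ Real.exp (σ * M₁ * (t - t0)) * (σ * (M₁ * B)) := by
        rw [abs_mul, abs_mul, abs_of_pos heτ, abs_of_pos hσ]
        exact mul_le_mul hee (mul_le_mul_of_nonneg_left hs1 hσ.le)
          (mul_nonneg hσ.le (abs_nonneg _)) (Real.exp_nonneg _)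
      rw [Real.norm_eq_abs, hF']
      exact (abs_add_le _ _).trans (add_le_add hpart1 hpart2)
    have hInt : IntervalIntegrable F' MeasureTheory.volume t0 t := by
      rw [intervalIntegrable_iff, Set.uIoc_of_le hle]
      apply MeasureTheory.Integrable.mono'
        (MeasureTheory.integrableOn_const measure_Ioc_lt_top.ne)
        (g := fun _ => Real.exp (σ * M₁ * (t - t0)) * (σ * M₁) * B +
          Real.exp (σ * M₁ * (t - t0)) * (σ * (M₁ * B)))
        (hF'aem.aestronglyMeasurable)
      exact (MeasureTheory.ae_restrict_iff' measurableSet_Ioc).2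
        (MeasureTheory.ae_of_all _ fun τ hτ => hF'bdd τ ⟨hτ.1.le, hτ.2⟩)
    clear hF'bdd hF'aem
    have hIlow : IntervalIntegrable (fun τ => σ * L τ i k) MeasureTheory.volume t0 t := by
      rw [intervalIntegrable_iff, Set.uIoc_of_le hle]
      apply MeasureTheory.Integrable.mono'
        (MeasureTheory.integrableOn_const measure_Ioc_lt_top.ne) (g := fun _ => σ * M₁)
        (((hmeas i k).const_mul σ).aestronglyMeasurable)
      apply (MeasureTheory.ae_restrict_iff' measurableSet_Ioc).2
      apply MeasureTheory.ae_of_all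
      intro τ hτ
      have hτ0 : 0 ≤ τ := le_trans ht0 hτ.1.le
      rw [Real.norm_eq_abs, abs_mul, abs_of_pos hσ]
      exact mul_le_mul_of_nonneg_left (hbdd τ hτ0 i k) hσ.le
    -- pointwise comparison
    have hpt : ∀ τ ∈ Set.Icc t0 t, σ * L τ i k ≤ F' τ := by
      intro τ hτ
      have hτ0 : 0 ≤ τ := le_trans ht0 hτ.1
      have hτIci : τ ∈ Set.Ici t0 := hτ.1
      have hepos := Real.exp_pos (σ * M₁ * (τ - t0))
      have hsum : L τ i i * V τ t0 i k + L τ i k * V τ t0 k k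
          ≤ ∑ j, L τ i j * V τ t0 j k := by
        have hsub : ({i, k} : Finset (Fin m)) ⊆ Finset.univ := Finset.subset_univ _
        have hnn : ∀ j ∈ Finset.univ, j ∉ ({i, k} : Finset (Fin m)) →
            0 ≤ L τ i j * V τ t0 j k := by
          intro j _ hj
          have hji : i ≠ j := fun h => hj (by simp [← h])
          exact mul_nonneg (hoff τ hτ0 i j hji) (hVnonneg t0 ht0 τ hτIci j k)
        have := Finset.sum_le_sum_of_subset_of_nonneg hsub hnn
        simpa [Finset.sum_pair hik] using this
      have hVik := hVnonneg t0 ht0 τ hτIci i k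
      have hVkk := part1 t0 ht0 τ hτIci k
      have hLik := hoff τ hτ0 i k hik
      have hLii := (abs_le.1 (hbdd τ hτ0 i i)).1
      have h1 : Real.exp (σ * M₁ * (τ - t0))
            * (σ * (L τ i i * V τ t0 i k + L τ i k * V τ t0 k k))
          ≤ Real.exp (σ * M₁ * (τ - t0)) * (σ * ∑ j, L τ i j * V τ t0 j k) :=
        mul_le_mul_of_nonneg_left (mul_le_mul_of_nonneg_left hsum hσ.le) hepos.le
      have h2 : 0 ≤ Real.exp (σ * M₁ * (τ - t0)) * σ * (M₁ + L τ i i) * V τ t0 i k :=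
        mul_nonneg (mul_nonneg (mul_nonneg hepos.le hσ.le) (by linarith)) hVik
      have h4 : σ * L τ i k ≤ Real.exp (σ * M₁ * (τ - t0))
          * (σ * (L τ i k * V τ t0 k k)) := by
        have hstep : Real.exp (σ * M₁ * (τ - t0))
              * (σ * (L τ i k * Real.exp (-(σ * M₁ * (τ - t0)))))
            ≤ Real.exp (σ * M₁ * (τ - t0)) * (σ * (L τ i k * V τ t0 k k)) :=
          mul_le_mul_of_nonneg_left (mul_le_mul_of_nonneg_left
            (mul_le_mul_of_nonneg_left hVkk hLik) hσ.le) hepos.le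
        have heq : Real.exp (σ * M₁ * (τ - t0))
              * (σ * (L τ i k * Real.exp (-(σ * M₁ * (τ - t0))))) = σ * L τ i k := by
          rw [show Real.exp (σ * M₁ * (τ - t0))
              * (σ * (L τ i k * Real.exp (-(σ * M₁ * (τ - t0)))))
            = σ * L τ i k * (Real.exp (σ * M₁ * (τ - t0))
              * Real.exp (-(σ * M₁ * (τ - t0)))) from by ring,
            ← Real.exp_add, add_neg_cancel, Real.exp_zero, mul_one]
        rw [← heq]
        exact hstep
      simp only [hF']
      linarith [h1, h2, h4]
    -- FTC and integral comparison
    have hFTC : ∫ τ in t0..t, F' τ = Real.exp (σ * M₁ * (t - t0)) * V t t0 i k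
        - Real.exp (σ * M₁ * (t0 - t0)) * V t0 t0 i k := by
      apply intervalIntegral.integral_eq_sub_of_hasDerivAt
      · intro τ hτ
        rw [Set.uIcc_of_le hle] at hτ
        exact hder t0 ht0 i k τ hτ.1
      · exact hInt
    have hmono2 : ∫ τ in t0..t, σ * L τ i k ≤ ∫ τ in t0..t, F' τ :=
      intervalIntegral.integral_mono_on hle hIlow hInt hpt
    have hz : Real.exp (σ * M₁ * (t0 - t0)) * V t0 t0 i k = 0 := by
      simp [hV0 t0 ht0, Matrix.one_apply_ne hik]
    have hkey : σ * ∫ τ in t0..t, L τ i k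
        ≤ Real.exp (σ * M₁ * (t - t0)) * V t t0 i k := by
      calc σ * ∫ τ in t0..t, L τ i k = ∫ τ in t0..t, σ * L τ i k :=
            (intervalIntegral.integral_const_mul σ _).symm
        _ ≤ ∫ τ in t0..t, F' τ := hmono2
        _ = Real.exp (σ * M₁ * (t - t0)) * V t t0 i k := by rw [hFTC, hz, sub_zero]
    have h3 := mul_le_mul_of_nonneg_left hkey (Real.exp_nonneg (-(σ * M₁ * (t - t0))))
    calc Real.exp (-(σ * M₁ * (t - t0))) * (σ * ∫ τ in t0..t, L τ i k)
        ≤ Real.exp (-(σ * M₁ * (t - t0)))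
          * (Real.exp (σ * M₁ * (t - t0)) * V t t0 i k) := h3
      _ = (Real.exp (-(σ * M₁ * (t - t0))) * Real.exp (σ * M₁ * (t - t0))) * V t t0 i k := by
          ring
      _ = V t t0 i k := by rw [← Real.exp_add, neg_add_cancel, Real.exp_zero, one_mul]
  refine ⟨part1, part2, ?_⟩
  intro t0 ht0 δ T hδ hT k i hik hint
  have h2 := part2 t0 ht0 (t0 + T) (by simp only [Set.mem_Ici]; linarith) k i hik
  rw [(by ring : t0 + T - t0 = T)] at h2
  calc Real.exp (-(σ * M₁ * T)) * σ * δ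
      ≤ Real.exp (-(σ * M₁ * T)) * (σ * ∫ τ in t0..(t0 + T), L τ i k) := by
        rw [mul_assoc]
        exact mul_le_mul_of_nonneg_left
          (mul_le_mul_of_nonneg_left hint.le hσ.le) (Real.exp_nonneg _)
    _ ≤ V (t0 + T) t0 i k := h2
end

section
/- Suppose Assumption A4 holds and let V(t,t0) be the solution matrix of u̇ = L(t)u. Let J ⊆ {1,…,m} be a nonempty proper subset, t0 ≥ 0, T > 0 and δ > 0, and suppose ∫_{t0}^{t0+T} l_ij(τ)dτ ≤ δ for all i ∈ J and j ∉ J. Then Σ_{i∈J, j∉J} V(t0+T, t0)_{ij} ≤ (m − #J)² · #J · e^{M₁(#J−1)T} · δ ≤ m³ e^{mM₁T} δ, where #J denotes the cardinality of J. -/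
open Set MeasureTheory

/-- Derivative of `x ↦ (min x 0)^2`. -/
lemma hasDerivAt_minsq (x : ℝ) : HasDerivAt (fun y : ℝ => (min y 0)^2) (2 * min x 0) x := by
  rcases lt_trichotomy x 0 with hx | hx | hx
  · have h2 : HasDerivAt (fun y : ℝ => y^2) (2*x) x := by
      simpa using hasDerivAt_pow 2 x
    rw [min_eq_left hx.le]
    apply h2.congr_of_eventuallyEq
    filter_upwards [Iio_mem_nhds hx] with y hy
    rw [min_eq_left (le_of_lt hy)]
  · subst hx
    have h0 : (2:ℝ) * min 0 0 = 0 := by norm_num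
    rw [h0, hasDerivAt_iff_isLittleO]
    simp only [sub_zero, smul_eq_mul, mul_zero, min_self, ne_eq, zero_pow, OfNat.ofNat_ne_zero,
      not_false_eq_true]
    rw [Asymptotics.isLittleO_iff]
    intro c hc
    filter_upwards [Metric.ball_mem_nhds (0:ℝ) hc] with y hy
    have hyc : |y| < c := by simpa [Real.dist_eq] using hy
    have h1 : |min y 0| ≤ |y| := by
      rcases min_cases y 0 with ⟨h,_⟩|⟨h,_⟩ <;> simp [h]
    rw [Real.norm_eq_abs, Real.norm_eq_abs]
    calc |(min y 0)^2| = |min y 0|^2 := by rw [abs_pow]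
      _ ≤ |y| * |y| := by rw [sq]; exact mul_le_mul h1 h1 (abs_nonneg _) (abs_nonneg _)
      _ ≤ c * |y| := by nlinarith [abs_nonneg y]
  · have h2 : HasDerivAt (fun _ : ℝ => (0:ℝ)) 0 x := hasDerivAt_const x 0
    have : (2:ℝ) * min x 0 = 0 := by rw [min_eq_right hx.le]; ring
    rw [this]
    apply h2.congr_of_eventuallyEq
    filter_upwards [Ioi_mem_nhds hx] with y hy
    rw [min_eq_right (le_of_lt hy)]
    norm_num

/-- If `f t0 = 0`, `f ≥ 0` and `f' ≤ C f` on `[t0,∞)`, then `f ≡ 0` there. -/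
lemma decay_zero {f f' : ℝ → ℝ} {t0 C : ℝ}
    (hd : ∀ t ∈ Ici t0, HasDerivAt f (f' t) t)
    (hle : ∀ t ∈ Ici t0, f' t ≤ C * f t)
    (h0 : f t0 = 0) (hnn : ∀ t ∈ Ici t0, 0 ≤ f t) :
    ∀ t ∈ Ici t0, f t = 0 := by
  set G : ℝ → ℝ := fun t => Real.exp (C * (t0 - t)) * f t with hGdef
  have hGd : ∀ t ∈ Ici t0, HasDerivAt G (Real.exp (C*(t0-t)) * (f' t - C * f t)) t := by
    intro t ht
    have h1 : HasDerivAt (fun s : ℝ => Real.exp (C*(t0-s))) (Real.exp (C*(t0-t)) * (-C)) t := by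
      have h0' : HasDerivAt (fun s : ℝ => C*(t0-s)) (-C) t := by
        simpa using ((hasDerivAt_id t).const_sub t0).const_mul C
      exact h0'.exp
    have := h1.fun_mul (hd t ht)
    refine this.congr_deriv (Eq.symm ?_)
    ring
  have hanti : AntitoneOn G (Ici t0) := by
    apply antitoneOn_of_deriv_nonpos (convex_Ici t0)
    · exact fun t ht => (hGd t ht).continuousAt.continuousWithinAt
    · intro t ht
      rw [interior_Ici] at ht
      exact (hGd t (Set.mem_Ici.2 ht.le)).differentiableAt.differentiableWithinAt
    · intro t ht
      rw [interior_Ici] at ht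
      rw [(hGd t (Set.mem_Ici.2 ht.le)).deriv]
      have h2 := hle t (Set.mem_Ici.2 ht.le)
      nlinarith [Real.exp_pos (C*(t0-t))]
  intro t ht
  have h1 : G t ≤ G t0 := hanti self_mem_Ici ht ht
  have h2 : G t0 = 0 := by simp [hGdef, h0]
  have h3 : 0 ≤ f t := hnn t ht
  have h4 : f t ≤ 0 := by
    have h5 : Real.exp (C*(t0-t)) * f t ≤ 0 := h1.trans_eq h2
    nlinarith [Real.exp_pos (C*(t0-t))]
  linarith

lemma sum_pair_bound {m : ℕ} (M₁ : ℝ) (a : Fin m → ℝ) :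
    ∑ i : Fin m, ∑ k : Fin m, M₁ * (a i ^ 2 + a k ^ 2)
      = 2 * m * M₁ * ∑ i, a i ^ 2 := by
  simp only [mul_add, Finset.sum_add_distrib, Finset.sum_const, Finset.card_univ,
    Fintype.card_fin, nsmul_eq_mul, ← Finset.mul_sum, ← Finset.sum_mul]
  ring
set_option maxHeartbeats 2000000 in
/-- under Assumption A4, if all couplings from outside a nonempty
proper index set `J` into `J` integrate to at most `δ` over `[t0, t0+T]`, then the
total mass that the rows of `V(t0+T,t0)` indexed by `J` place outside `J` is at most
`(m−#J)²·#J·e^{M₁(#J−1)T}·δ ≤ m³ e^{mM₁T} δ`. -/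
theorem stmt_17 (m : ℕ) (hm : 0 < m)
    (L : ℝ → Matrix (Fin m) (Fin m) ℝ) (M₁ : ℝ) (hM₁ : 0 < M₁)
    (hmeas : ∀ i j, Measurable fun t => L t i j)
    (hoff : ∀ t, 0 ≤ t → ∀ i j, i ≠ j → 0 ≤ L t i j)
    (hdiag : ∀ t, 0 ≤ t → ∀ i, L t i i = -∑ j ∈ ({i}ᶜ : Finset (Fin m)), L t i j)
    (hbdd : ∀ t, 0 ≤ t → ∀ i j, |L t i j| ≤ M₁)
    (V : ℝ → ℝ → Matrix (Fin m) (Fin m) ℝ)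
    (hV0 : ∀ t0, 0 ≤ t0 → V t0 t0 = 1)
    (hVd : ∀ t0, 0 ≤ t0 → ∀ t ∈ Set.Ici t0, ∀ i j,
        HasDerivAt (fun τ => V τ t0 i j) (∑ k, L t i k * V t t0 k j) t)
    (J : Finset (Fin m)) (hJne : J.Nonempty) (hJproper : J ≠ Finset.univ)
    (t0 T δ : ℝ) (ht0 : 0 ≤ t0) (hT : 0 < T) (hδ : 0 < δ)
    (hint : ∀ i ∈ J, ∀ j ∈ Jᶜ, (∫ τ in t0..(t0 + T), L τ i j) ≤ δ) :
    (∑ i ∈ J, ∑ j ∈ Jᶜ, V (t0 + T) t0 i j)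
        ≤ ((m : ℝ) - J.card) ^ 2 * J.card
            * Real.exp (M₁ * ((J.card : ℝ) - 1) * T) * δ ∧
      ((m : ℝ) - J.card) ^ 2 * J.card * Real.exp (M₁ * ((J.card : ℝ) - 1) * T) * δ
        ≤ (m : ℝ) ^ 3 * Real.exp ((m : ℝ) * M₁ * T) * δ := by
  have hcpos : 0 < J.card := Finset.card_pos.2 hJne
  have hclt : J.card < m := by
    have h1 : J ⊂ Finset.univ := Finset.ssubset_univ_iff.2 hJproper
    simpa using Finset.card_lt_card h1
  -- basic facts about L
  have hLdnp : ∀ t, 0 ≤ t → ∀ i, L t i i ≤ 0 := by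
    intro t ht i
    rw [hdiag t ht i]
    simp only [neg_nonpos]
    apply Finset.sum_nonneg
    intro j hj
    exact hoff t ht i j (by simpa [eq_comm] using Finset.mem_compl.1 hj)
  have hL0 : ∀ t, 0 ≤ t → ∀ i, ∑ k, L t i k = 0 := by
    intro t ht i
    have h1 : ∑ k ∈ ({i} : Finset (Fin m)), L t i k + ∑ k ∈ ({i}ᶜ : Finset (Fin m)), L t i k
        = ∑ k, L t i k := Finset.sum_add_sum_compl _ _
    rw [Finset.sum_singleton, hdiag t ht i] at h1
    linarith [h1]
  have hLub : ∀ t, 0 ≤ t → ∀ i j, L t i j ≤ M₁ := fun t ht i j => (abs_le.1 (hbdd t ht i j)).2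
  have hLlb : ∀ t, 0 ≤ t → ∀ i j, -M₁ ≤ L t i j := fun t ht i j => (abs_le.1 (hbdd t ht i j)).1
  -- Step 1 : nonnegativity of V on [t0, ∞)
  have hVnn : ∀ t ∈ Set.Ici t0, ∀ i j, 0 ≤ V t t0 i j := by
    have hzero := decay_zero
      (f := fun t => ∑ i, ∑ j, (min (V t t0 i j) 0)^2)
      (f' := fun t => ∑ i, ∑ j, 2 * min (V t t0 i j) 0 * ∑ k, L t i k * V t t0 k j)
      (t0 := t0) (C := 2 * m * M₁)
      (by
        intro t ht
        apply HasDerivAt.fun_sum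
        intro i _
        apply HasDerivAt.fun_sum
        intro j _
        exact (hasDerivAt_minsq (V t t0 i j)).comp t (hVd t0 ht0 t ht i j))
      (by
        intro t ht
        have ht' : (0:ℝ) ≤ t := le_trans ht0 ht
        have key : ∀ i j, 2 * min (V t t0 i j) 0 * ∑ k, L t i k * V t t0 k j
            ≤ ∑ k, M₁ * ((min (V t t0 i j) 0)^2 + (min (V t t0 k j) 0)^2) := by
          intro i j
          rw [Finset.mul_sum]
          apply Finset.sum_le_sum
          intro k _
          set a := min (V t t0 i j) 0 with ha_def
          set b := min (V t t0 k j) 0 with hb_def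
          have ha : a ≤ 0 := min_le_right _ _
          have hb : b ≤ 0 := min_le_right _ _
          have hbV : b ≤ V t t0 k j := min_le_left _ _
          by_cases hik : k = i
          · subst hik
            have hLii := hLdnp t ht' k
            have hav : a * V t t0 k j = a ^ 2 := by
              have : a = b := by rw [ha_def, hb_def]
              rw [this, hb_def]
              rcases min_cases (V t t0 k j) 0 with ⟨h,_⟩|⟨h,_⟩ <;> simp [h, sq]
            have : 2 * a * (L t k k * V t t0 k j) = 2 * L t k k * a^2 := by
              rw [← hav]; ring
            rw [this]
            nlinarith [sq_nonneg a, sq_nonneg b]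
          · have hik' : i ≠ k := fun h => hik h.symm
            have hL1 : 0 ≤ L t i k := hoff t ht' i k hik'
            have hL2 : L t i k ≤ M₁ := hLub t ht' i k
            nlinarith [mul_nonneg hL1 (mul_nonneg (neg_nonneg.2 ha) (sub_nonneg.2 hbV)),
              mul_nonneg (sub_nonneg.2 hL2) (by nlinarith : (0:ℝ) ≤ a * b),
              mul_nonneg hM₁.le (sq_nonneg (a - b))]
        calc ∑ i, ∑ j, 2 * min (V t t0 i j) 0 * ∑ k, L t i k * V t t0 k j
            ≤ ∑ i, ∑ j, ∑ k, M₁ * ((min (V t t0 i j) 0)^2 + (min (V t t0 k j) 0)^2) :=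
              Finset.sum_le_sum fun i _ => Finset.sum_le_sum fun j _ => key i j
          _ = ∑ j : Fin m, ∑ i, ∑ k, M₁ * ((min (V t t0 i j) 0)^2 + (min (V t t0 k j) 0)^2) :=
              Finset.sum_comm
          _ = ∑ j : Fin m, 2 * m * M₁ * ∑ i, (min (V t t0 i j) 0)^2 := by
              refine Finset.sum_congr rfl fun j _ => ?_
              exact sum_pair_bound M₁ (fun i => min (V t t0 i j) 0)
          _ = 2 * m * M₁ * ∑ j : Fin m, ∑ i, (min (V t t0 i j) 0)^2 := by
              rw [Finset.mul_sum]
          _ = 2 * m * M₁ * ∑ i, ∑ j, (min (V t t0 i j) 0)^2 := by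
              rw [Finset.sum_comm])
      (by
        show ∑ i : Fin m, ∑ j : Fin m, (min (V t0 t0 i j) 0) ^ 2 = 0
        rw [hV0 t0 ht0]
        apply Finset.sum_eq_zero
        intro i _
        apply Finset.sum_eq_zero
        intro j _
        rw [Matrix.one_apply]
        split <;> norm_num)
      (by
        intro t _
        positivity)
    intro t ht i j
    have h1 := hzero t ht
    have h2 : ∑ j, (min (V t t0 i j) 0)^2 = 0 := by
      have := (Finset.sum_eq_zero_iff_of_nonneg (fun i _ => by positivity)).1 h1 i (Finset.mem_univ i)
      exact this
    have h3 : (min (V t t0 i j) 0)^2 = 0 :=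
      (Finset.sum_eq_zero_iff_of_nonneg (fun j _ => by positivity)).1 h2 j (Finset.mem_univ j)
    have h4 : min (V t t0 i j) 0 = 0 := by
      exact pow_eq_zero_iff (by norm_num) |>.1 h3
    exact min_eq_right_iff.1 h4
  -- Step 2 : row sums equal 1 on [t0, ∞)
  have hrow : ∀ t ∈ Set.Ici t0, ∀ i, ∑ j, V t t0 i j = 1 := by
    have hRd : ∀ t ∈ Set.Ici t0, ∀ i, HasDerivAt (fun τ => ∑ j, V τ t0 i j)
        (∑ k, L t i k * ∑ j, V t t0 k j) t := by
      intro t ht i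
      have h1 := HasDerivAt.fun_sum (fun j (_ : j ∈ Finset.univ) => hVd t0 ht0 t ht i j)
      refine h1.congr_deriv (Eq.symm ?_)
      rw [Finset.sum_comm]
      exact Finset.sum_congr rfl fun k _ => (Finset.mul_sum _ _ _)
    have hzero := decay_zero
      (f := fun t => ∑ i, (∑ j, V t t0 i j - 1)^2)
      (f' := fun t => ∑ i, 2 * (∑ j, V t t0 i j - 1) * ∑ k, L t i k * ∑ j, V t t0 k j)
      (t0 := t0) (C := 2 * m * M₁)
      (by
        intro t ht
        apply HasDerivAt.fun_sum
        intro i _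
        have h2 := ((hRd t ht i).sub_const 1).pow 2
        refine h2.congr_deriv (Eq.symm ?_)
        ring_nf)
      (by
        intro t ht
        have ht' : (0:ℝ) ≤ t := le_trans ht0 ht
        have key : ∀ i, 2 * (∑ j, V t t0 i j - 1) * ∑ k, L t i k * ∑ j, V t t0 k j
            ≤ ∑ k, M₁ * ((∑ j, V t t0 i j - 1)^2 + (∑ j, V t t0 k j - 1)^2) := by
          intro i
          have hsplit : ∑ k, L t i k * ∑ j, V t t0 k j
              = ∑ k, L t i k * (∑ j, V t t0 k j - 1) := by
            simp only [mul_sub, mul_one, Finset.sum_sub_distrib, hL0 t ht' i, sub_zero]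
          rw [hsplit, Finset.mul_sum]
          apply Finset.sum_le_sum
          intro k _
          have hL2 := hLub t ht' i k
          have hL3 := hLlb t ht' i k
          set a := ∑ j, V t t0 i j - 1
          set b := ∑ j, V t t0 k j - 1
          nlinarith [mul_nonneg (sub_nonneg.2 hL2) (sq_nonneg (a - b)),
            mul_nonneg (sub_nonneg.2 (neg_le.1 hL3)) (sq_nonneg (a + b))]
        calc ∑ i, 2 * (∑ j, V t t0 i j - 1) * ∑ k, L t i k * ∑ j, V t t0 k j
            ≤ ∑ i, ∑ k, M₁ * ((∑ j, V t t0 i j - 1)^2 + (∑ j, V t t0 k j - 1)^2) :=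
              Finset.sum_le_sum fun i _ => key i
          _ = 2 * m * M₁ * ∑ i, (∑ j, V t t0 i j - 1)^2 :=
              sum_pair_bound M₁ (fun i => ∑ j, V t t0 i j - 1))
      (by
        show ∑ i : Fin m, (∑ j, V t0 t0 i j - 1) ^ 2 = 0
        rw [hV0 t0 ht0]
        apply Finset.sum_eq_zero
        intro i _
        simp [Matrix.one_apply])
      (by
        intro t _
        positivity)
    intro t ht i
    have h1 := hzero t ht
    have h2 : (∑ j, V t t0 i j - 1)^2 = 0 :=
      (Finset.sum_eq_zero_iff_of_nonneg (fun i _ => by positivity)).1 h1 i (Finset.mem_univ i)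
    have h3 : ∑ j, V t t0 i j - 1 = 0 := pow_eq_zero_iff (by norm_num) |>.1 h2
    linarith
  -- Step 3 : the Grönwall estimate
  have hTnn : t0 ≤ t0 + T := by linarith
  have hc1R : (1:ℝ) ≤ (J.card : ℝ) := by exact_mod_cast hcpos
  set a : ℝ := M₁ * ((J.card : ℝ) - 1) with ha_def
  have ha_nn : 0 ≤ a := mul_nonneg hM₁.le (by linarith)
  set S : ℝ → ℝ := fun t => ∑ i ∈ J, ∑ j ∈ Jᶜ, V t t0 i j with hS_def
  set φ : ℝ → ℝ := fun t => ∑ i ∈ J, ∑ k ∈ Jᶜ, L t i k with hφ_def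
  set S' : ℝ → ℝ := fun t => ∑ i ∈ J, ∑ j ∈ Jᶜ, ∑ k, L t i k * V t t0 k j with hS'_def
  have hSd : ∀ t ∈ Set.Ici t0, HasDerivAt S (S' t) t := fun t ht =>
    HasDerivAt.fun_sum fun i _ => HasDerivAt.fun_sum fun j _ => hVd t0 ht0 t ht i j
  have hφnn : ∀ t ∈ Set.Ici t0, 0 ≤ φ t := by
    intro t ht
    apply Finset.sum_nonneg
    intro i hi
    apply Finset.sum_nonneg
    intro k hk
    exact hoff t (le_trans ht0 ht) i k (fun h => (Finset.mem_compl.1 hk) (h ▸ hi))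
  have hkey : ∀ t ∈ Set.Ici t0, S' t ≤ a * S t + φ t := by
    intro t ht
    have ht' : (0:ℝ) ≤ t := le_trans ht0 ht
    set W : Fin m → ℝ := fun k => ∑ j ∈ Jᶜ, V t t0 k j with hW_def
    have hWnn : ∀ k, 0 ≤ W k := fun k => Finset.sum_nonneg fun j _ => hVnn t ht k j
    have hWle1 : ∀ k, W k ≤ 1 := by
      intro k
      calc W k ≤ ∑ j, V t t0 k j :=
            Finset.sum_le_sum_of_subset_of_nonneg (Finset.subset_univ _)
              (fun j _ _ => hVnn t ht k j)
        _ = 1 := hrow t ht k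
    have hSW : S t = ∑ k ∈ J, W k := rfl
    have hrewr : ∀ i, ∑ j ∈ Jᶜ, ∑ k, L t i k * V t t0 k j = ∑ k, L t i k * W k := by
      intro i
      rw [Finset.sum_comm]
      exact Finset.sum_congr rfl fun k _ => (Finset.mul_sum _ _ _).symm
    have hbound : ∀ i ∈ J, ∑ k, L t i k * W k ≤ M₁ * (S t - W i) + ∑ k ∈ Jᶜ, L t i k := by
      intro i hi
      have hsplit : ∑ k ∈ J, (L t i k * W k) + ∑ k ∈ Jᶜ, (L t i k * W k)
          = ∑ k, L t i k * W k := Finset.sum_add_sum_compl J _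
      rw [← hsplit]
      have hpart1 : ∑ k ∈ J, L t i k * W k ≤ M₁ * (S t - W i) := by
        have herase : L t i i * W i + ∑ k ∈ J.erase i, L t i k * W k
            = ∑ k ∈ J, L t i k * W k := Finset.add_sum_erase J (fun k => L t i k * W k) hi
        rw [← herase]
        have h1 : L t i i * W i ≤ 0 :=
          mul_nonpos_of_nonpos_of_nonneg (hLdnp t ht' i) (hWnn i)
        have h2 : ∑ k ∈ J.erase i, L t i k * W k ≤ ∑ k ∈ J.erase i, M₁ * W k :=
          Finset.sum_le_sum fun k _ => mul_le_mul_of_nonneg_right (hLub t ht' i k) (hWnn k)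
        have h3 : ∑ k ∈ J.erase i, M₁ * W k = M₁ * (S t - W i) := by
          rw [← Finset.mul_sum, Finset.sum_erase_eq_sub hi, hSW]
        linarith
      have hpart2 : ∑ k ∈ Jᶜ, L t i k * W k ≤ ∑ k ∈ Jᶜ, L t i k := by
        apply Finset.sum_le_sum
        intro k hk
        have hL1 : 0 ≤ L t i k := hoff t ht' i k (fun h => (Finset.mem_compl.1 hk) (h ▸ hi))
        calc L t i k * W k ≤ L t i k * 1 := mul_le_mul_of_nonneg_left (hWle1 k) hL1
          _ = L t i k := mul_one _
      linarith
    calc S' t = ∑ i ∈ J, ∑ k, L t i k * W k := Finset.sum_congr rfl fun i _ => hrewr i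
      _ ≤ ∑ i ∈ J, (M₁ * (S t - W i) + ∑ k ∈ Jᶜ, L t i k) :=
          Finset.sum_le_sum fun i hi => hbound i hi
      _ = M₁ * ((J.card : ℝ) * S t - S t) + φ t := by
          rw [Finset.sum_add_distrib]
          congr 1
          rw [← Finset.mul_sum, Finset.sum_sub_distrib, Finset.sum_const, ← hSW, nsmul_eq_mul]
      _ = a * S t + φ t := by rw [ha_def]; ring
  set F : ℝ → ℝ := fun t => Real.exp (a * (t0 - t)) * S t with hF_def
  have hFd : ∀ t ∈ Set.Ici t0, HasDerivAt F (Real.exp (a*(t0-t)) * (S' t - a * S t)) t := by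
    intro t ht
    have h1 : HasDerivAt (fun s : ℝ => Real.exp (a*(t0-s))) (Real.exp (a*(t0-t)) * (-a)) t := by
      have h0' : HasDerivAt (fun s : ℝ => a*(t0-s)) (-a) t := by
        simpa using ((hasDerivAt_id t).const_sub t0).const_mul a
      exact h0'.exp
    have h2 := h1.fun_mul (hSd t ht)
    refine h2.congr_deriv (Eq.symm ?_)
    ring
  have hmain : F (t0+T) - F t0 ≤ ∫ y in t0..(t0+T), φ y := by
    apply intervalIntegral.sub_le_integral_of_hasDeriv_right_of_le hTnn
    · exact fun t ht' => (hFd t ht'.1).continuousAt.continuousWithinAt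
    · exact fun x hx => (hFd x (le_of_lt hx.1)).hasDerivWithinAt
    · apply MeasureTheory.Measure.integrableOn_of_bounded
        (M := (J.card * Jᶜ.card : ℝ) * M₁) (measure_Icc_lt_top).ne
      · exact ((Finset.measurable_sum _ (fun i _ =>
          Finset.measurable_sum _ fun k _ => hmeas i k)).aestronglyMeasurable)
      · apply MeasureTheory.ae_restrict_of_forall_mem measurableSet_Icc
        intro x hx
        have hx0 : (0:ℝ) ≤ x := le_trans ht0 hx.1
        rw [Real.norm_eq_abs]
        calc |φ x| ≤ ∑ i ∈ J, |∑ k ∈ Jᶜ, L x i k| := Finset.abs_sum_le_sum_abs _ _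
          _ ≤ ∑ i ∈ J, ∑ k ∈ Jᶜ, |L x i k| :=
              Finset.sum_le_sum fun i _ => Finset.abs_sum_le_sum_abs _ _
          _ ≤ ∑ i ∈ J, ∑ k ∈ Jᶜ, M₁ :=
              Finset.sum_le_sum fun i _ => Finset.sum_le_sum fun k _ => hbdd x hx0 i k
          _ = (J.card * Jᶜ.card : ℝ) * M₁ := by
              simp [Finset.sum_const, nsmul_eq_mul]
              ring
    · intro x hx
      have hx1 : x ∈ Set.Ici t0 := le_of_lt hx.1
      have h1 := hkey x hx1
      have hexp : Real.exp (a*(t0-x)) ≤ 1 := by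
        apply Real.exp_le_one_iff.2
        have : t0 ≤ x := hx1
        nlinarith
      calc Real.exp (a*(t0-x)) * (S' x - a * S x) ≤ Real.exp (a*(t0-x)) * φ x :=
            mul_le_mul_of_nonneg_left (by linarith) (Real.exp_nonneg _)
        _ ≤ 1 * φ x := mul_le_mul_of_nonneg_right hexp (hφnn x hx1)
        _ = φ x := one_mul _
  have hLint : ∀ i k, IntervalIntegrable (fun τ => L τ i k) MeasureTheory.volume t0 (t0+T) := by
    intro i k
    rw [intervalIntegrable_iff_integrableOn_Ioc_of_le hTnn]
    apply MeasureTheory.Measure.integrableOn_of_bounded (M := M₁) (measure_Ioc_lt_top).ne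
      (hmeas i k).aestronglyMeasurable
    apply MeasureTheory.ae_restrict_of_forall_mem measurableSet_Ioc
    intro x hx
    exact (Real.norm_eq_abs _).symm ▸ hbdd x (le_trans ht0 hx.1.le) i k
  have hφint_le : (∫ y in t0..(t0+T), φ y) ≤ (J.card : ℝ) * Jᶜ.card * δ := by
    have heq : (∫ y in t0..(t0+T), ∑ i ∈ J, ∑ k ∈ Jᶜ, L y i k)
        = ∑ i ∈ J, ∑ k ∈ Jᶜ, ∫ y in t0..(t0+T), L y i k := by
      have hin : ∀ i : Fin m, IntervalIntegrable (fun y => ∑ k ∈ Jᶜ, L y i k)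
          MeasureTheory.volume t0 (t0+T) := fun i => by
        have h := IntervalIntegrable.sum Jᶜ (f := fun k (y:ℝ) => L y i k)
          (fun k _ => hLint i k)
        rwa [Finset.sum_fn] at h
      rw [intervalIntegral.integral_finset_sum (f := fun i (y:ℝ) => ∑ k ∈ Jᶜ, L y i k)
        (fun i _ => hin i)]
      exact Finset.sum_congr rfl fun i _ =>
        intervalIntegral.integral_finset_sum (f := fun k (y:ℝ) => L y i k)
          (fun k _ => hLint i k)
    rw [heq]
    calc ∑ i ∈ J, ∑ k ∈ Jᶜ, ∫ y in t0..(t0+T), L y i k ≤ ∑ i ∈ J, ∑ k ∈ Jᶜ, δ :=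
          Finset.sum_le_sum fun i hi => Finset.sum_le_sum fun k hk => hint i hi k hk
      _ = (J.card : ℝ) * Jᶜ.card * δ := by
          simp [Finset.sum_const, nsmul_eq_mul]
          ring
  have hF0 : F t0 = 0 := by
    have hS0 : S t0 = 0 := by
      apply Finset.sum_eq_zero
      intro i hi
      apply Finset.sum_eq_zero
      intro j hj
      rw [hV0 t0 ht0, Matrix.one_apply_ne (by rintro rfl; exact (Finset.mem_compl.1 hj) hi)]
    simp [hF_def, hS0]
  have hScard : ((Jᶜ.card : ℕ) : ℝ) = (m:ℝ) - J.card := by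
    have h : Jᶜ.card = m - J.card := by simp [Finset.card_compl]
    rw [h, Nat.cast_sub hclt.le]
  have hfinal : S (t0+T) ≤ Real.exp (a*T) * ((J.card : ℝ) * Jᶜ.card * δ) := by
    have h1 : Real.exp (a*(t0-(t0+T))) * S (t0+T) ≤ (J.card : ℝ) * Jᶜ.card * δ := by
      have h2 := le_trans (by linarith [hmain] : F (t0+T) ≤ ∫ y in t0..(t0+T), φ y) hφint_le
      simpa [hF_def] using h2
    have h3 : Real.exp (a*T) * Real.exp (a*(t0-(t0+T))) = 1 := by
      rw [← Real.exp_add]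
      have h4 : a*T + a*(t0-(t0+T)) = 0 := by ring
      rw [h4, Real.exp_zero]
    calc S (t0+T) = Real.exp (a*T) * (Real.exp (a*(t0-(t0+T))) * S (t0+T)) := by
          rw [← mul_assoc, h3, one_mul]
      _ ≤ Real.exp (a*T) * ((J.card : ℝ) * Jᶜ.card * δ) :=
          mul_le_mul_of_nonneg_left h1 (Real.exp_nonneg _)
  have hmc : (1:ℝ) ≤ (m:ℝ) - J.card := by
    have h : (J.card : ℕ) + 1 ≤ m := hclt
    have h' : ((J.card : ℕ) : ℝ) + 1 ≤ (m:ℝ) := by exact_mod_cast h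
    linarith
  constructor
  · calc S (t0+T) ≤ Real.exp (a*T) * ((J.card : ℝ) * Jᶜ.card * δ) := hfinal
      _ = ((m:ℝ) - J.card) * (J.card : ℝ) * Real.exp (a*T) * δ := by rw [hScard]; ring
      _ ≤ ((m:ℝ) - J.card)^2 * (J.card : ℝ) * Real.exp (a*T) * δ := by
          have h4 : ((m:ℝ) - J.card) ≤ ((m:ℝ) - J.card)^2 := by nlinarith
          have h5 : (0:ℝ) ≤ (J.card : ℝ) * Real.exp (a*T) * δ := by positivity
          nlinarith [mul_le_mul_of_nonneg_right h4 h5]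
  · have hcm : (J.card : ℝ) ≤ (m:ℝ) := by linarith
    have hmc0 : (0:ℝ) ≤ (m:ℝ) - J.card := by linarith
    have hexp2 : Real.exp (a*T) ≤ Real.exp ((m:ℝ)*M₁*T) := by
      apply Real.exp_le_exp.2
      rw [ha_def]
      nlinarith [mul_nonneg (mul_nonneg hM₁.le
        (by linarith : (0:ℝ) ≤ (m:ℝ) - ((J.card:ℝ) - 1))) hT.le]
    have hA : ((m:ℝ) - J.card)^2 * (J.card : ℝ) ≤ (m:ℝ)^2 * (m:ℝ) := by
      have h1 : ((m:ℝ) - J.card)^2 ≤ (m:ℝ)^2 := by nlinarith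
      exact mul_le_mul h1 hcm (Nat.cast_nonneg _) (by positivity)
    have hB : ((m:ℝ) - J.card)^2 * (J.card : ℝ) * Real.exp (a*T)
        ≤ (m:ℝ)^2 * (m:ℝ) * Real.exp ((m:ℝ)*M₁*T) :=
      mul_le_mul hA hexp2 (Real.exp_nonneg _) (by positivity)
    calc ((m:ℝ) - J.card)^2 * (J.card : ℝ) * Real.exp (a*T) * δ
        ≤ (m:ℝ)^2 * (m:ℝ) * Real.exp ((m:ℝ)*M₁*T) * δ :=
          mul_le_mul_of_nonneg_right hB hδ.le
      _ = (m:ℝ)^3 * Real.exp ((m:ℝ)*M₁*T) * δ := by ring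
end

section
/- Let G be a finite directed graph on the vertex set {1,…,m}. If there is no vertex r from which every vertex of G is reachable along directed edges (i.e., G has no spanning tree), then there exist two disjoint nonempty vertex sets J1 and J2 such that G has no edge from any vertex outside J1 into a vertex of J1, and no edge from any vertex outside J2 into a vertex of J2. -/
/-- If a finite directed graph on `{1,…,m}` has no spanning tree (no vertex
from which every vertex is reachable), then there are two disjoint nonempty closed vertex
sets `J1`, `J2` (no incoming edges from outside). -/
theorem stmt_19 (m : ℕ) (hm : 0 < m) (E : Fin m → Fin m → Prop)
    (h : ¬ ∃ r : Fin m, ∀ i : Fin m, Relation.ReflTransGen E r i) :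
    ∃ J1 J2 : Set (Fin m), J1.Nonempty ∧ J2.Nonempty ∧ Disjoint J1 J2 ∧
      (¬ ∃ j i, j ∉ J1 ∧ i ∈ J1 ∧ E j i) ∧
      (¬ ∃ j i, j ∉ J2 ∧ i ∈ J2 ∧ E j i) := by
  classical
  set R : Fin m → Set (Fin m) := fun v => {u | Relation.ReflTransGen E u v} with hR
  have hmem : ∀ v, v ∈ R v := fun v => Relation.ReflTransGen.refl
  have hsub : ∀ {v w}, w ∈ R v → R w ⊆ R v := by
    intro v w hw u hu
    exact Relation.ReflTransGen.trans hu hw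
  have hclosed : ∀ v, ¬ ∃ j i, j ∉ R v ∧ i ∈ R v ∧ E j i := by
    rintro v ⟨j, i, hj, hi, hji⟩
    exact hj (Relation.ReflTransGen.head hji hi)
  -- pick v1 minimizing ncard of R
  obtain ⟨v1, -, hmin⟩ := Finset.exists_min_image Finset.univ (fun v => (R v).ncard)
    ⟨⟨0, hm⟩, Finset.mem_univ _⟩
  have hstrong : ∀ w ∈ R v1, R w = R v1 := by
    intro w hw
    exact Set.eq_of_subset_of_ncard_le (hsub hw)
      (hmin w (Finset.mem_univ _)) (Set.toFinite _)
  -- v1 doesn't reach everything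
  push_neg at h
  obtain ⟨i, hi⟩ := h v1
  refine ⟨R v1, R i, ⟨v1, hmem v1⟩, ⟨i, hmem i⟩, ?_, hclosed v1, hclosed i⟩
  rw [Set.disjoint_left]
  intro w hw1 hw2
  have : v1 ∈ R i := (hsub hw2) ((hstrong w hw1) ▸ hmem v1)
  exact hi this
end
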